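/- (One-period-forward representation of choice-specific values, equation (6).) Let Z be a finite nonempty set and D a finite nonempty set, β ∈ ℝ, and let V : Z → ℝ, v : Z × D → ℝ, u : Z × D → ℝ, ψ : D × Z → ℝ, f : Z × D → Z → ℝ satisfy, for all z ∈ Z and d ∈ D: (i) V(z) = ψ(d, z) + v(z, d), and (ii) v(z, d) = u(z, d) + β Σ_{z'} V(z') f(z' | z, d). Let w : Z × D → ℝ satisfy Σ_{d'} w(z₁, d') = 1 for every z₁. Define ū^w(z₁) = Σ_{d'} w(z₁, d') u(z₁, d'), ψ̄^w(z₁) = Σ_{d'} w(z₁, d') ψ(d', z₁), and f̄^w(z₂ | z₁) = Σ_{d'} w(z₁, d') f(z₂ | z₁, d'). Then for all z ∈ Z, d ∈ D: v(z, d) = u(z, d) + β Σ_{z₁} [ū^w(z₁) + ψ̄^w(z₁)] f(z₁ | z, d) + β² Σ_{z₂} V(z₂) Σ_{z₁} f̄^w(z₂ | z₁) f(z₁ | z, d). -/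
import Mathlib


/-- One-period-forward representation of choice-specific values (equation (6)):
substituting the `w`-weighted value identity into the Bellman recursion expresses
`v z d` via one-period-ahead weighted payoffs and ψ-corrections plus a two-period
continuation term with the `w`-weighted forward transition. -/
theorem one_period_forward_representation
    {Z D : Type*} [Fintype Z] [Fintype D] [Nonempty Z] [Nonempty D]
    (β : ℝ) (V : Z → ℝ) (v : Z → D → ℝ) (u : Z → D → ℝ) (ψ : D → Z → ℝ)
    (f : Z → D → Z → ℝ)
    (hAM : ∀ z d, V z = ψ d z + v z d)
    (hBellman : ∀ z d, v z d = u z d + β * ∑ z' : Z, V z' * f z d z')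
    (w : Z → D → ℝ) (hw : ∀ z₁, ∑ d' : D, w z₁ d' = 1)
    (ubar : Z → ℝ) (hubar : ∀ z₁, ubar z₁ = ∑ d' : D, w z₁ d' * u z₁ d')
    (ψbar : Z → ℝ) (hψbar : ∀ z₁, ψbar z₁ = ∑ d' : D, w z₁ d' * ψ d' z₁)
    (fbar : Z → Z → ℝ) (hfbar : ∀ z₁ z₂, fbar z₁ z₂ = ∑ d' : D, w z₁ d' * f z₁ d' z₂) :
    ∀ (z : Z) (d : D),
      v z d = u z d
        + β * (∑ z₁ : Z, (ubar z₁ + ψbar z₁) * f z d z₁)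
        + β ^ 2 * (∑ z₂ : Z, V z₂ * ∑ z₁ : Z, fbar z₁ z₂ * f z d z₁) := by
  have key : ∀ z₁ : Z, V z₁ = ubar z₁ + ψbar z₁ + β * ∑ z₂ : Z, V z₂ * fbar z₁ z₂ := by
    intro z₁
    have h1 : V z₁ = ∑ d' : D, w z₁ d' * V z₁ := by
      rw [← Finset.sum_mul, hw, one_mul]
    calc V z₁ = ∑ d' : D, w z₁ d' * V z₁ := h1
      _ = ∑ d' : D, w z₁ d' * (ψ d' z₁ + (u z₁ d' + β * ∑ z₂ : Z, V z₂ * f z₁ d' z₂)) := by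
          refine Finset.sum_congr rfl fun d' _ => ?_
          rw [← hBellman, ← hAM]
      _ = ubar z₁ + ψbar z₁ + β * ∑ z₂ : Z, V z₂ * fbar z₁ z₂ := by
          rw [hubar, hψbar]
          simp only [mul_add, Finset.sum_add_distrib]
          have h2 : ∑ d' : D, w z₁ d' * (β * ∑ z₂ : Z, V z₂ * f z₁ d' z₂)
              = β * ∑ z₂ : Z, V z₂ * fbar z₁ z₂ := by
            simp only [hfbar, Finset.mul_sum]
            rw [Finset.sum_comm]
            exact Finset.sum_congr rfl fun z₂ _ => Finset.sum_congr rfl fun d' _ => by ring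
          rw [h2]
          ring
  intro z d
  rw [hBellman z d]
  have : ∑ z' : Z, V z' * f z d z'
      = (∑ z₁ : Z, (ubar z₁ + ψbar z₁) * f z d z₁)
        + β * ∑ z₂ : Z, V z₂ * ∑ z₁ : Z, fbar z₁ z₂ * f z d z₁ := by
    calc ∑ z' : Z, V z' * f z d z'
        = ∑ z₁ : Z, (ubar z₁ + ψbar z₁ + β * ∑ z₂ : Z, V z₂ * fbar z₁ z₂) * f z d z₁ := by
          exact Finset.sum_congr rfl fun z₁ _ => by rw [← key]
      _ = (∑ z₁ : Z, (ubar z₁ + ψbar z₁) * f z d z₁)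
          + β * ∑ z₂ : Z, V z₂ * ∑ z₁ : Z, fbar z₁ z₂ * f z d z₁ := by
          simp only [add_mul, Finset.sum_add_distrib]
          congr 1
          simp only [Finset.mul_sum, Finset.sum_mul]
          rw [Finset.sum_comm]
          exact Finset.sum_congr rfl fun z₂ _ => Finset.sum_congr rfl fun z₁ _ => by ring
  rw [this]
  ring
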